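/- For every graph G with maximum degree Δ, for every vertex v of G, and for every positive integer s, the number of paths on 2s vertices (counted as subgraphs, so a path and its reverse are counted once) that contain v is at most s·Δ·(Δ−1)^{2s−2}. -/

import Mathlib

open Set List
set_option linter.unusedSectionVars false

section Helpers

variable {V : Type*} [Fintype V] [DecidableEq V] (G : SimpleGraph V) [DecidableRel G.Adj]

/-- finite union bound for ncard over a Finset index -/
private lemma ncard_biUnion_le' {α β : Type*} (s : Finset α) (f : α → Set β) :
    (⋃ a ∈ s, f a).ncard ≤ ∑ a ∈ s, (f a).ncard := by
  classical
  induction s using Finset.induction_on with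
  | empty => simp
  | @insert a s h ih =>
    rw [Finset.set_biUnion_insert, Finset.sum_insert h]
    exact le_trans (Set.ncard_union_le _ _) (by gcongr)

/-- lists of length `k` forming a nodup chain starting (implicitly) at `u`. -/
private def Bset (u : V) (k : ℕ) : Set (List V) :=
  {l | l.length = k ∧ List.Chain G.Adj u l ∧ (u :: l).Nodup}

/-- as `Bset` but first element forbidden to be `w`. -/
private def Aset (u w : V) (k : ℕ) : Set (List V) :=
  {l | l ∈ Bset G u k ∧ l.head? ≠ some w}

private lemma Bset_finite (u : V) (k : ℕ) : (Bset G u k).Finite :=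
  (List.finite_length_eq V k).subset fun _ hl => hl.1

private lemma Aset_finite (u w : V) (k : ℕ) : (Aset G u w k).Finite :=
  (Bset_finite G u k).subset fun _ hl => hl.1

private lemma cardA (Δ : ℕ) (hΔ : ∀ u : V, G.degree u ≤ Δ) :
    ∀ (k : ℕ) (u w : V), G.Adj u w → (Aset G u w k).ncard ≤ (Δ - 1) ^ k := by
  intro k
  induction k with
  | zero =>
    intro u w _
    have hsub : Aset G u w 0 ⊆ {[]} := by
      rintro l ⟨⟨hl, -, -⟩, -⟩
      simp [Aset, Bset, List.length_eq_zero_iff.mp hl]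
    simpa using Set.ncard_le_ncard hsub (Set.finite_singleton _)
  | succ k ih =>
    intro u w huw
    have hsub : Aset G u w (k + 1) ⊆
        ⋃ x ∈ (G.neighborFinset u).erase w, (x :: ·) '' Aset G x u k := by
      rintro l ⟨⟨hlen, hchain, hnodup⟩, hhead⟩
      match l with
      | [] => simp at hlen
      | x :: t =>
        have hadj : G.Adj u x := (List.chain_cons.mp hchain).1
        have hxw : x ≠ w := fun h => hhead (by simp [h])
        refine Set.mem_biUnion
          (Finset.mem_erase.mpr ⟨hxw, (G.mem_neighborFinset _ _).mpr hadj⟩) ?_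
        refine ⟨t, ⟨⟨by simpa using hlen, (List.chain_cons.mp hchain).2, hnodup.of_cons⟩, ?_⟩, rfl⟩
        intro h
        exact (List.nodup_cons.mp hnodup).1
          (List.mem_cons_of_mem _ (List.mem_of_mem_head? h))
    calc (Aset G u w (k + 1)).ncard
        ≤ ∑ x ∈ (G.neighborFinset u).erase w, ((x :: ·) '' Aset G x u k).ncard := by
          refine le_trans (Set.ncard_le_ncard hsub ?_) (ncard_biUnion_le' _ _)
          exact Set.Finite.biUnion (Finset.finite_toSet _)
            (fun x _ => (Aset_finite G x u k).image _)
      _ ≤ ∑ _x ∈ (G.neighborFinset u).erase w, (Δ - 1) ^ k := by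
          refine Finset.sum_le_sum fun x hx => ?_
          rw [Set.ncard_image_of_injective _ (List.cons_injective)]
          exact ih x u (G.adj_symm ((G.mem_neighborFinset _ _).mp (Finset.mem_erase.mp hx).2))
      _ ≤ (Δ - 1) * (Δ - 1) ^ k := by
          rw [Finset.sum_const, smul_eq_mul]
          have hcard : ((G.neighborFinset u).erase w).card ≤ Δ - 1 := by
            rw [Finset.card_erase_of_mem ((G.mem_neighborFinset _ _).mpr huw)]
            exact Nat.sub_le_sub_right (hΔ u) 1
          exact Nat.mul_le_mul_right _ hcard
      _ = (Δ - 1) ^ (k + 1) := by ring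

private lemma cardB (Δ : ℕ) (hΔ : ∀ u : V, G.degree u ≤ Δ) (k : ℕ) (hk : 1 ≤ k) (u : V) :
    (Bset G u k).ncard ≤ Δ * (Δ - 1) ^ (k - 1) := by
  obtain ⟨k, rfl⟩ := Nat.exists_eq_add_of_le hk
  have hsub : Bset G u (1 + k) ⊆
      ⋃ x ∈ G.neighborFinset u, (x :: ·) '' Aset G x u k := by
    rintro l ⟨hlen, hchain, hnodup⟩
    match l with
    | [] => simp at hlen; omega
    | x :: t =>
      have hadj : G.Adj u x := (List.chain_cons.mp hchain).1
      refine Set.mem_biUnion ((G.mem_neighborFinset _ _).mpr hadj) ?_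
      refine ⟨t, ⟨⟨by simp at hlen ⊢; omega, (List.chain_cons.mp hchain).2,
        hnodup.of_cons⟩, ?_⟩, rfl⟩
      intro h
      exact (List.nodup_cons.mp hnodup).1
        (List.mem_cons_of_mem _ (List.mem_of_mem_head? h))
  calc (Bset G u (1 + k)).ncard
      ≤ ∑ x ∈ G.neighborFinset u, ((x :: ·) '' Aset G x u k).ncard := by
        refine le_trans (Set.ncard_le_ncard hsub ?_) (ncard_biUnion_le' _ _)
        exact Set.Finite.biUnion (Finset.finite_toSet _)
          (fun x _ => (Aset_finite G x u k).image _)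
    _ ≤ ∑ x ∈ G.neighborFinset u, (Δ - 1) ^ k := by
        refine Finset.sum_le_sum fun x hx => ?_
        rw [Set.ncard_image_of_injective _ (List.cons_injective)]
        exact cardA G Δ hΔ k x u (G.adj_symm ((G.mem_neighborFinset _ _).mp hx))
    _ ≤ Δ * (Δ - 1) ^ (1 + k - 1) := by
        rw [Finset.sum_const, smul_eq_mul]
        have : (G.neighborFinset u).card ≤ Δ := hΔ u
        have h1 : 1 + k - 1 = k := by omega
        rw [h1]
        exact Nat.mul_le_mul_right _ this

/-- decomposition of a path at the position of `v` -/
private lemma decomp (v : V) (l : List V) (i : ℕ) (hchain : l.Chain' G.Adj)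
    (hnodup : l.Nodup) (hv : l[i]? = some v) :
    l = l.take i ++ v :: l.drop (i + 1) ∧
    l.drop (i + 1) ∈ Bset G v (l.length - 1 - i) ∧
    (l.take i).reverse ∈ Bset G v i ∧
    (∀ w, (l.drop (i + 1)).head? = some w → (l.take i).reverse.head? ≠ some w) := by
  have hi : i < l.length := by
    by_contra h
    rw [List.getElem?_eq_none_iff.mpr (le_of_not_gt h)] at hv
    cases hv
  have hgv : l[i] = v := by
    have := List.getElem?_eq_getElem hi
    rw [hv] at this
    exact (Option.some.injEq _ _).mp this.symm
  set P := l.take i with hP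
  set Q := l.drop (i + 1) with hQ
  have hdrop : l.drop i = v :: Q := by rw [List.drop_eq_getElem_cons hi, hgv]
  have heq : l = P ++ v :: Q := by rw [hP, ← hdrop, List.take_append_drop]
  have hPlen : P.length = i := by simp [hP, List.length_take]; omega
  have hchain' := heq ▸ hchain
  obtain ⟨cP, cQ, hlast⟩ := List.isChain_append.mp hchain'
  have hnodup' := heq ▸ hnodup
  obtain ⟨nP, nQ, disj⟩ := List.nodup_append.mp hnodup'
  have hQlen : Q.length = l.length - 1 - i := by
    simp [hQ, List.length_drop]; omega
  have hvP : v ∉ P := fun hmem => disj _ hmem _ List.mem_cons_self rfl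
  have hflip : flip G.Adj = G.Adj := by
    funext a b
    exact propext (G.adj_comm b a)
  have hPv : (P ++ [v]).Chain' G.Adj := by
    refine List.isChain_append.mpr ⟨cP, List.isChain_singleton v, fun x hx y hy => ?_⟩
    simp only [List.head?_cons, Option.mem_def, Option.some.injEq] at hy
    subst hy
    exact hlast x hx v (by simp)
  have hcPrev : List.Chain G.Adj v P.reverse := by
    have h1 : (P ++ [v]).reverse = v :: P.reverse := by simp
    have h2 : (P ++ [v]).reverse.Chain' G.Adj := by
      have h3 : List.IsChain (fun a b => G.Adj b a) (P ++ [v]) := by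
        rw [show (fun a b => G.Adj b a) = G.Adj from hflip]; exact hPv
      exact List.isChain_reverse.mpr h3
    rw [h1] at h2
    exact h2
  refine ⟨heq, ⟨hQlen, cQ, nQ⟩, ⟨by simp [hPlen], hcPrev, ?_⟩, ?_⟩
  · rw [List.nodup_cons]
    exact ⟨by simpa using hvP, List.nodup_reverse.mpr nP⟩
  · intro w hw hcontra
    have hwP : w ∈ P := by
      have := List.mem_of_mem_head? (hcontra : w ∈ (P.reverse).head?)
      simpa using this
    exact disj _ hwP _ (List.mem_cons_of_mem _ (List.mem_of_mem_head? hw)) rfl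

/-- the number of paths with `v` at position `i` is at most `Δ(Δ-1)^(n-2)` -/
private lemma cardD (Δ : ℕ) (hΔ : ∀ u : V, G.degree u ≤ Δ) (v : V) (n i : ℕ)
    (hn : 2 ≤ n) (hi : i < n) :
    {l : List V | l.length = n ∧ l.Chain' G.Adj ∧ l.Nodup ∧ l[i]? = some v}.ncard
      ≤ Δ * (Δ - 1) ^ (n - 2) := by
  set D := {l : List V | l.length = n ∧ l.Chain' G.Adj ∧ l.Nodup ∧ l[i]? = some v} with hD
  have hDfin : D.Finite := (List.finite_length_eq V n).subset fun _ hl => hl.1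
  rcases eq_or_lt_of_le (Nat.le_of_lt_succ (by omega : i < n - 1 + 1)) with hlast | hmid
  · -- case i = n - 1 : v is the last vertex; reverse the list
    have key : ∀ l ∈ D, l = l.take i ++ [v] := by
      intro l hl
      obtain ⟨heq, -, -, -⟩ := decomp G v l i hl.2.1 hl.2.2.1 hl.2.2.2
      have hQ : l.drop (i + 1) = [] := List.drop_eq_nil_of_le (by rw [hl.1]; omega)
      rwa [hQ] at heq
    have hψ : Set.InjOn (fun l : List V => (l.take i).reverse) D := by
      intro l₁ h₁ l₂ h₂ he
      simp only at he
      have ht : l₁.take i = l₂.take i := List.reverse_injective he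
      rw [key l₁ h₁, key l₂ h₂, ht]
    have himg : (fun l : List V => (l.take i).reverse) '' D ⊆ Bset G v (n - 1) := by
      rintro _ ⟨l, hl, rfl⟩
      obtain ⟨-, -, hPm, -⟩ := decomp G v l i hl.2.1 hl.2.2.1 hl.2.2.2
      rwa [← hlast]
    calc D.ncard = ((fun l : List V => (l.take i).reverse) '' D).ncard :=
          (Set.ncard_image_of_injOn hψ).symm
      _ ≤ (Bset G v (n - 1)).ncard := Set.ncard_le_ncard himg (Bset_finite _ _ _)
      _ ≤ Δ * (Δ - 1) ^ (n - 1 - 1) := cardB G Δ hΔ (n - 1) (by omega) v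
      _ = Δ * (Δ - 1) ^ (n - 2) := by rw [Nat.sub_sub]
  · -- case i < n - 1 : fiber over the part of the path after v
    have hQfin := Bset_finite G v (n - 1 - i)
    have hsub : D ⊆ ⋃ Q ∈ hQfin.toFinset, {l ∈ D | l.drop (i + 1) = Q} := by
      intro l hl
      obtain ⟨-, hQm, -, -⟩ := decomp G v l i hl.2.1 hl.2.2.1 hl.2.2.2
      rw [hl.1] at hQm
      exact Set.mem_biUnion (hQfin.mem_toFinset.mpr hQm) ⟨hl, rfl⟩
    have fiberbound : ∀ Q ∈ hQfin.toFinset, ({l ∈ D | l.drop (i + 1) = Q}).ncard ≤ (Δ - 1) ^ i := by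
      intro Q hQmem
      obtain ⟨hQlen, hQchain, -⟩ := hQfin.mem_toFinset.mp hQmem
      match Q, hQlen with
      | [], hQlen => exfalso; simp at hQlen; omega
      | w :: Q', hQlen =>
        have hvw : G.Adj v w := (List.chain_cons.mp hQchain).1
        set F := {l ∈ D | l.drop (i + 1) = w :: Q'} with hF
        have hψ : Set.InjOn (fun l : List V => (l.take i).reverse) F := by
          intro l₁ h₁ l₂ h₂ he
          simp only at he
          have ht : l₁.take i = l₂.take i := List.reverse_injective he
          obtain ⟨heq₁, -, -, -⟩ := decomp G v l₁ i h₁.1.2.1 h₁.1.2.2.1 h₁.1.2.2.2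
          obtain ⟨heq₂, -, -, -⟩ := decomp G v l₂ i h₂.1.2.1 h₂.1.2.2.1 h₂.1.2.2.2
          rw [heq₁, heq₂, ht, h₁.2, h₂.2]
        have himg : (fun l : List V => (l.take i).reverse) '' F ⊆ Aset G v w i := by
          rintro _ ⟨l, hl, rfl⟩
          obtain ⟨-, -, hPm, hhead⟩ := decomp G v l i hl.1.2.1 hl.1.2.2.1 hl.1.2.2.2
          exact ⟨hPm, hhead w (by rw [hl.2]; rfl)⟩
        calc F.ncard = ((fun l : List V => (l.take i).reverse) '' F).ncard :=
              (Set.ncard_image_of_injOn hψ).symm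
          _ ≤ (Aset G v w i).ncard := Set.ncard_le_ncard himg (Aset_finite _ _ _ _)
          _ ≤ (Δ - 1) ^ i := cardA G Δ hΔ i v w hvw
    calc D.ncard ≤ (⋃ Q ∈ hQfin.toFinset, {l ∈ D | l.drop (i + 1) = Q}).ncard := by
          refine Set.ncard_le_ncard hsub ?_
          exact Set.Finite.biUnion (Finset.finite_toSet _)
            (fun Q _ => hDfin.subset fun l hl => hl.1)
      _ ≤ ∑ Q ∈ hQfin.toFinset, ({l ∈ D | l.drop (i + 1) = Q}).ncard := ncard_biUnion_le' _ _
      _ ≤ ∑ _Q ∈ hQfin.toFinset, (Δ - 1) ^ i := Finset.sum_le_sum fiberbound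
      _ = (Bset G v (n - 1 - i)).ncard * (Δ - 1) ^ i := by
          rw [Finset.sum_const, smul_eq_mul, Set.ncard_eq_toFinset_card _ hQfin]
      _ ≤ (Δ * (Δ - 1) ^ (n - 1 - i - 1)) * (Δ - 1) ^ i :=
          Nat.mul_le_mul_right _ (cardB G Δ hΔ (n - 1 - i) (by omega) v)
      _ = Δ * (Δ - 1) ^ (n - 2) := by
          rw [mul_assoc, ← pow_add]
          congr 2
          omega

end Helpers

/-- For every graph `G` with maximum degree `Δ`, every vertex `v` and every `s ≥ 1`,
the number of paths on `2s` vertices containing `v` is at most `s·Δ·(Δ-1)^(2s-2)`.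
Paths are counted as subgraphs (a path and its reverse are counted once); here we
count vertex sequences (lists of `2s` distinct vertices, consecutive ones adjacent,
containing `v`), so that each such path is counted exactly twice — once in each
direction — whence the factor `2`. -/
theorem paths_containing_vertex_bound {V : Type*} [Fintype V] [DecidableEq V]
    (G : SimpleGraph V) [DecidableRel G.Adj] (Δ : ℕ) (hΔ : ∀ u : V, G.degree u ≤ Δ)
    (v : V) (s : ℕ) (hs : 0 < s) :
    Set.ncard {l : List V | l.length = 2 * s ∧ l.Chain' G.Adj ∧ l.Nodup ∧ v ∈ l}
      ≤ 2 * (s * Δ * (Δ - 1) ^ (2 * s - 2)) := by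
  classical
  set n := 2 * s with hn
  set M := {l : List V | l.length = n ∧ l.Chain' G.Adj ∧ l.Nodup ∧ v ∈ l} with hM
  have hsub : M ⊆ ⋃ i ∈ Finset.range n,
      {l : List V | l.length = n ∧ l.Chain' G.Adj ∧ l.Nodup ∧ l[i]? = some v} := by
    intro l hl
    obtain ⟨i, hiv⟩ := List.mem_iff_getElem?.mp hl.2.2.2
    have hilt : i < n := by
      rw [← hl.1]
      by_contra h
      rw [List.getElem?_eq_none_iff.mpr (le_of_not_gt h)] at hiv
      cases hiv
    exact Set.mem_biUnion (Finset.mem_range.mpr hilt) ⟨hl.1, hl.2.1, hl.2.2.1, hiv⟩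
  calc M.ncard
      ≤ (⋃ i ∈ Finset.range n,
          {l : List V | l.length = n ∧ l.Chain' G.Adj ∧ l.Nodup ∧ l[i]? = some v}).ncard := by
        refine Set.ncard_le_ncard hsub ?_
        exact Set.Finite.biUnion (Finset.finite_toSet _)
          (fun i _ => (List.finite_length_eq V n).subset fun _ h => h.1)
    _ ≤ ∑ i ∈ Finset.range n,
          ({l : List V | l.length = n ∧ l.Chain' G.Adj ∧ l.Nodup ∧ l[i]? = some v}).ncard :=
        ncard_biUnion_le' _ _
    _ ≤ ∑ _i ∈ Finset.range n, Δ * (Δ - 1) ^ (n - 2) :=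
        Finset.sum_le_sum fun i hi =>
          cardD G Δ hΔ v n i (by omega) (Finset.mem_range.mp hi)
    _ = n * (Δ * (Δ - 1) ^ (n - 2)) := by
        rw [Finset.sum_const, Finset.card_range, smul_eq_mul]
    _ = 2 * (s * Δ * (Δ - 1) ^ (2 * s - 2)) := by rw [hn]; ring
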